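/- Let A ∈ ℝ^{m×n} have full column rank, let w, z, σ̄ ∈ ℝ^m be entrywise positive, let ε, γ > 0 and p ∈ (0, 2). For diagonal W = diag(w), define σ(W^{1/2-1/p} A) ∈ ℝ^m by σ(M)_i = (M (MᵀM)^{-1} Mᵀ)_{ii}. Suppose w ≈_ε σ(W^{1/2-1/p} A) + z and σ̄ ≈_γ σ(W^{1/2-1/p} A) + z. Define w' ∈ ℝ^m by w'_i = (w_i^{2/p - 1} · σ̄_i)^{p/2}, and W' = diag(w'). Then w ≈_{(ε+γ)p/2} w' and w' ≈_{(ε+γ)·|1 - p/2| + γ} σ(W'^{1/2-1/p} A) + z. -/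

import Mathlib

open Matrix

/-- `u ≈_δ v`: entrywise `e^{-δ} v ≤ u ≤ e^{δ} v`. -/
def Approx {m : ℕ} (δ : ℝ) (u v : Fin m → ℝ) : Prop :=
  ∀ i, Real.exp (-δ) * v i ≤ u i ∧ u i ≤ Real.exp δ * v i

/-- Leverage scores `σ(M)_i = (M (MᵀM)⁻¹ Mᵀ)_{ii}`. -/
noncomputable def lev {m n : ℕ} (M : Matrix (Fin m) (Fin n) ℝ) : Fin m → ℝ :=
  fun i => (M * (Mᵀ * M)⁻¹ * Mᵀ) i i

/-- The row-rescaled matrix `W^{1/2 - 1/p} A` for `W = diag w`. -/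
noncomputable def scaled {m n : ℕ} (w : Fin m → ℝ) (p : ℝ)
    (A : Matrix (Fin m) (Fin n) ℝ) : Matrix (Fin m) (Fin n) ℝ :=
  Matrix.diagonal (fun i => w i ^ ((1:ℝ)/2 - 1/p)) * A

lemma mulVec_inj_of_rank {m n : ℕ} (A : Matrix (Fin m) (Fin n) ℝ) (hrank : A.rank = n)
    {x : Fin n → ℝ} (hx : A *ᵥ x = 0) : x = 0 := by
  have h := LinearMap.finrank_range_add_finrank_ker A.mulVecLin
  rw [show Module.finrank ℝ (LinearMap.range A.mulVecLin) = A.rank from rfl] at h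
  simp only [Module.finrank_pi, Fintype.card_fin, hrank] at h
  have hker : Module.finrank ℝ (LinearMap.ker A.mulVecLin) = 0 := by omega
  have : LinearMap.ker A.mulVecLin = ⊥ := Submodule.finrank_eq_zero.mp hker
  have hx' : x ∈ LinearMap.ker A.mulVecLin := by simpa [Matrix.mulVecLin_apply] using hx
  rw [this] at hx'
  simpa using hx'

lemma quadform_conj {m n : ℕ} (A : Matrix (Fin m) (Fin n) ℝ) (d : Fin m → ℝ) (u : Fin n → ℝ) :
    u ⬝ᵥ ((Aᵀ * Matrix.diagonal d * A) *ᵥ u) = ∑ i, d i * (A *ᵥ u) i ^ 2 := by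
  rw [← Matrix.mulVec_mulVec, ← Matrix.mulVec_mulVec, Matrix.dotProduct_mulVec,
    Matrix.vecMul_transpose]
  simp [dotProduct, Matrix.mulVec_diagonal]
  ring_nf
  exact Finset.sum_congr rfl fun i _ => by ring

lemma posdef_conj {m n : ℕ} (A : Matrix (Fin m) (Fin n) ℝ) (hrank : A.rank = n)
    (d : Fin m → ℝ) (hd : ∀ i, 0 < d i) : (Aᵀ * Matrix.diagonal d * A).PosDef := by
  refine Matrix.PosDef.of_dotProduct_mulVec_pos ?_ ?_
  · unfold Matrix.IsHermitian
    rw [Matrix.conjTranspose_eq_transpose_of_trivial]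
    rw [Matrix.transpose_mul, Matrix.transpose_mul, Matrix.transpose_transpose,
      Matrix.diagonal_transpose, Matrix.mul_assoc]
  · intro x hx
    simp only [star_trivial]
    rw [quadform_conj]
    have hAx : A *ᵥ x ≠ 0 := fun h => hx (mulVec_inj_of_rank A hrank h)
    obtain ⟨i, hi⟩ := Function.ne_iff.mp hAx
    refine Finset.sum_pos' (fun j _ => mul_nonneg (hd j).le (sq_nonneg _))
      ⟨i, Finset.mem_univ i, mul_pos (hd i) (pow_two_pos_of_ne_zero hi)⟩

lemma var_ineq {n : ℕ} (Y : Matrix (Fin n) (Fin n) ℝ) (hY : Y.PosDef) (c : ℝ) (hc : 0 < c)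
    (u v : Fin n → ℝ) :
    2 * (u ⬝ᵥ v) - c * (u ⬝ᵥ (Y *ᵥ u)) ≤ c⁻¹ * (v ⬝ᵥ (Y⁻¹ *ᵥ v)) := by
  have hYu : IsUnit Y.det := hY.det_pos.ne'.isUnit
  have hYt : Yᵀ = Y := by
    rw [← Matrix.conjTranspose_eq_transpose_of_trivial]; exact hY.1
  set r : Fin n → ℝ := u - c⁻¹ • (Y⁻¹ *ᵥ v) with hr
  have h0 : 0 ≤ r ⬝ᵥ (Y *ᵥ r) := by
    by_cases h : r = 0
    · simp [h]
    · exact le_of_lt (by simpa using hY.dotProduct_mulVec_pos h)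
  have hYYinv : Y *ᵥ (Y⁻¹ *ᵥ v) = v := by
    rw [Matrix.mulVec_mulVec, Matrix.mul_nonsing_inv _ hYu, Matrix.one_mulVec]
  have h1 : (Y⁻¹ *ᵥ v) ⬝ᵥ (Y *ᵥ u) = v ⬝ᵥ u := by
    rw [Matrix.dotProduct_mulVec, ← Matrix.mulVec_transpose, hYt, hYYinv]
  have key : r ⬝ᵥ (Y *ᵥ r) = u ⬝ᵥ (Y *ᵥ u) - c⁻¹ * (u ⬝ᵥ v) - c⁻¹ * (u ⬝ᵥ v)
      + c⁻¹ * c⁻¹ * (v ⬝ᵥ (Y⁻¹ *ᵥ v)) := by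
    simp only [hr, Matrix.mulVec_sub, Matrix.mulVec_smul, sub_dotProduct,
      dotProduct_sub, smul_dotProduct, dotProduct_smul, hYYinv, h1,
      smul_eq_mul, dotProduct_comm v u, dotProduct_comm (Y⁻¹ *ᵥ v) v]
    ring
  rw [key] at h0
  have h3 := mul_nonneg hc.le h0
  have e : c * (u ⬝ᵥ (Y *ᵥ u) - c⁻¹ * (u ⬝ᵥ v) - c⁻¹ * (u ⬝ᵥ v)
      + c⁻¹ * c⁻¹ * (v ⬝ᵥ (Y⁻¹ *ᵥ v)))
      = c * (u ⬝ᵥ (Y *ᵥ u)) - (u ⬝ᵥ v) - (u ⬝ᵥ v) + c⁻¹ * (v ⬝ᵥ (Y⁻¹ *ᵥ v)) := by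
    field_simp
  rw [e] at h3
  linarith

/-- diagonal entry of A * B * Aᵀ as a quadratic form in the i-th row of A -/
lemma diag_ABAt {m n : ℕ} (A : Matrix (Fin m) (Fin n) ℝ) (B : Matrix (Fin n) (Fin n) ℝ)
    (i : Fin m) : (A * B * Aᵀ) i i = (fun j => A i j) ⬝ᵥ (B *ᵥ fun j => A i j) := by
  simp only [Matrix.mul_apply, Matrix.transpose_apply, dotProduct, Matrix.mulVec, dotProduct,
    Finset.sum_mul, Finset.mul_sum]
  rw [Finset.sum_comm]
  exact Finset.sum_congr rfl fun j _ => Finset.sum_congr rfl fun k _ => by ring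

/-- the key comparison: inverse quadratic forms are antitone under scalar domination -/
lemma inv_quad_le {m n : ℕ} (A : Matrix (Fin m) (Fin n) ℝ) (hrank : A.rank = n)
    (d d' : Fin m → ℝ) (hd : ∀ i, 0 < d i) (hd' : ∀ i, 0 < d' i)
    (c : ℝ) (hc : 0 < c) (hcd : ∀ i, c * d' i ≤ d i) (i : Fin m) :
    (A * (Aᵀ * Matrix.diagonal d * A)⁻¹ * Aᵀ) i i
      ≤ c⁻¹ * (A * (Aᵀ * Matrix.diagonal d' * A)⁻¹ * Aᵀ) i i := by
  set X := Aᵀ * Matrix.diagonal d * A with hX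
  set Y := Aᵀ * Matrix.diagonal d' * A with hY
  have hXpd := posdef_conj A hrank d hd
  have hYpd := posdef_conj A hrank d' hd'
  set v : Fin n → ℝ := fun j => A i j with hv
  rw [diag_ABAt, diag_ABAt]
  set u : Fin n → ℝ := X⁻¹ *ᵥ v with hu
  have hXu : X *ᵥ u = v := by
    rw [hu, Matrix.mulVec_mulVec, Matrix.mul_nonsing_inv _ hXpd.det_pos.ne'.isUnit,
      Matrix.one_mulVec]
  have e1 : v ⬝ᵥ (X⁻¹ *ᵥ v) = 2 * (u ⬝ᵥ v) - u ⬝ᵥ (X *ᵥ u) := by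
    rw [hXu, dotProduct_comm v u]; ring
  have e2 : c * (u ⬝ᵥ (Y *ᵥ u)) ≤ u ⬝ᵥ (X *ᵥ u) := by
    rw [hX, hY, quadform_conj, quadform_conj, Finset.mul_sum]
    exact Finset.sum_le_sum fun j _ => by
      have := mul_le_mul_of_nonneg_right (hcd j) (sq_nonneg ((A *ᵥ u) j))
      linarith [this]
  have := var_ineq Y hYpd c hc u v
  linarith [e1, e2, this]

/-- lev of the scaled matrix -/
lemma lev_scaled_eq {m n : ℕ} (A : Matrix (Fin m) (Fin n) ℝ) (u : Fin m → ℝ)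
    (hu : ∀ i, 0 < u i) (p : ℝ) (i : Fin m) :
    lev (scaled u p A) i
      = u i ^ (1 - 2/p) *
        (A * (Aᵀ * Matrix.diagonal (fun j => u j ^ (1 - 2/p)) * A)⁻¹ * Aᵀ) i i := by
  set d : Fin m → ℝ := fun i => u i ^ ((1:ℝ)/2 - 1/p) with hd
  have hdd : Matrix.diagonal d * Matrix.diagonal d
      = Matrix.diagonal (fun j => u j ^ (1 - 2/p)) := by
    rw [Matrix.diagonal_mul_diagonal]
    have hfun : (fun j => d j * d j) = fun j => u j ^ (1 - 2/p) := by
      funext j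
      simp only [hd]
      rw [← Real.rpow_add (hu j)]
      congr 1
      ring
    rw [hfun]
  have hMt : (scaled u p A)ᵀ = Aᵀ * Matrix.diagonal d := by
    rw [scaled, Matrix.transpose_mul, Matrix.diagonal_transpose]
  have hMtM : (scaled u p A)ᵀ * (scaled u p A)
      = Aᵀ * Matrix.diagonal (fun j => u j ^ (1 - 2/p)) * A := by
    rw [hMt, scaled, Matrix.mul_assoc Aᵀ, ← Matrix.mul_assoc (Matrix.diagonal d), hdd,
      ← Matrix.mul_assoc]
  have hentry : ∀ C : Matrix (Fin m) (Fin m) ℝ,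
      (Matrix.diagonal d * C * Matrix.diagonal d) i i = d i * C i i * d i := by
    intro C
    rw [Matrix.mul_diagonal, Matrix.diagonal_mul]
  have hassoc : scaled u p A * ((scaled u p A)ᵀ * scaled u p A)⁻¹ * (scaled u p A)ᵀ
      = Matrix.diagonal d
        * (A * (Aᵀ * Matrix.diagonal (fun j => u j ^ (1 - 2/p)) * A)⁻¹ * Aᵀ)
        * Matrix.diagonal d := by
    rw [hMtM, hMt, scaled]
    simp only [Matrix.mul_assoc]
    rfl
  rw [lev, hassoc, hentry]
  have hdi : d i * d i = u i ^ (1 - 2/p) := by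
    simp only [hd]
    rw [← Real.rpow_add (hu i)]
    congr 1
    ring
  rw [mul_right_comm, hdi]

lemma approx_flip {a b δ : ℝ} (h : Real.exp (-δ) * b ≤ a) : b ≤ Real.exp δ * a := by
  have := mul_le_mul_of_nonneg_left h (Real.exp_pos δ).le
  rw [← mul_assoc, ← Real.exp_add] at this
  simpa using this

lemma approx_flip' {a b δ : ℝ} (h : a ≤ Real.exp δ * b) : Real.exp (-δ) * a ≤ b := by
  have := mul_le_mul_of_nonneg_left h (Real.exp_pos (-δ)).le
  rw [← mul_assoc, ← Real.exp_add] at this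
  simpa using this

/-- One step of the Cohen–Peng iteration contracts the approximation error of
the `z`-regularized `ℓ_p` Lewis weights: if `w ≈_ε σ(W^{1/2-1/p}A) + z` and
`σ̄ ≈_γ σ(W^{1/2-1/p}A) + z`, and `w'_i = (w_i^{2/p-1} σ̄_i)^{p/2}`, then
`w ≈_{(ε+γ)p/2} w'` and `w' ≈_{(ε+γ)|1-p/2| + γ} σ(W'^{1/2-1/p}A) + z`. -/
theorem stmt_4 {m n : ℕ} (A : Matrix (Fin m) (Fin n) ℝ)
    (hrank : A.rank = n)
    (w z σb : Fin m → ℝ)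
    (hw : ∀ i, 0 < w i) (hz : ∀ i, 0 < z i) (hσb : ∀ i, 0 < σb i)
    (ε γ p : ℝ) (hε : 0 < ε) (hγ : 0 < γ) (hp : p ∈ Set.Ioo (0:ℝ) 2)
    (hw_apx : Approx ε w (fun i => lev (scaled w p A) i + z i))
    (hσ_apx : Approx γ σb (fun i => lev (scaled w p A) i + z i))
    (w' : Fin m → ℝ)
    (hw' : ∀ i, w' i = (w i ^ (2/p - 1) * σb i) ^ (p/2)) :
    Approx ((ε + γ) * p / 2) w w' ∧
    Approx ((ε + γ) * |1 - p/2| + γ) w' (fun i => lev (scaled w' p A) i + z i) := by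
  obtain ⟨hp0, hp2⟩ := hp
  have hpne : p ≠ 0 := hp0.ne'
  set q : ℝ := 2/p - 1 with hq
  have hq0 : 0 < q := by
    rw [hq]
    have : 1 < 2/p := (one_lt_div hp0).mpr hp2
    linarith
  set L : Fin m → ℝ := lev (scaled w p A) with hL
  -- basic comparisons between w and σb
  have hLσ_up : ∀ i, L i + z i ≤ Real.exp γ * σb i := fun i => approx_flip (hσ_apx i).1
  have hLσ_lo : ∀ i, Real.exp (-γ) * σb i ≤ L i + z i := fun i => approx_flip' (hσ_apx i).2
  have hLw_up : ∀ i, L i + z i ≤ Real.exp ε * w i := fun i => approx_flip (hw_apx i).1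
  have hwσ_up : ∀ i, w i ≤ Real.exp (ε + γ) * σb i := by
    intro i
    calc w i ≤ Real.exp ε * (L i + z i) := (hw_apx i).2
      _ ≤ Real.exp ε * (Real.exp γ * σb i) :=
          mul_le_mul_of_nonneg_left (hLσ_up i) (Real.exp_pos ε).le
      _ = Real.exp (ε + γ) * σb i := by rw [← mul_assoc, ← Real.exp_add]
  have hσw_up : ∀ i, σb i ≤ Real.exp (ε + γ) * w i := by
    intro i
    calc σb i ≤ Real.exp γ * (L i + z i) := (hσ_apx i).2
      _ ≤ Real.exp γ * (Real.exp ε * w i) :=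
          mul_le_mul_of_nonneg_left (hLw_up i) (Real.exp_pos γ).le
      _ = Real.exp (ε + γ) * w i := by rw [← mul_assoc, ← Real.exp_add, add_comm γ ε]
  -- rewrite w and w' as rpow
  have hwq : ∀ i, (0:ℝ) < w i ^ q := fun i => Real.rpow_pos_of_pos (hw i) q
  have hww : ∀ i, w i = (w i ^ q * w i) ^ (p/2) := by
    intro i
    have e1 : w i ^ q * w i = w i ^ (2/p) := by
      nth_rewrite 2 [← Real.rpow_one (w i)]
      rw [← Real.rpow_add (hw i), hq]
      congr 1
      ring
    have e2 : (2/p) * (p/2) = 1 := by field_simp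
    rw [e1, ← Real.rpow_mul (hw i).le, e2, Real.rpow_one]
  -- Part 1
  have hA1 : Approx ((ε + γ) * p / 2) w w' := by
    intro i
    constructor
    · -- exp(-(ε+γ)p/2) * w' ≤ w
      refine approx_flip' ?_
      calc w' i = (w i ^ q * σb i) ^ (p/2) := hw' i
        _ ≤ (Real.exp (ε + γ) * (w i ^ q * w i)) ^ (p/2) := by
            refine Real.rpow_le_rpow (mul_nonneg (hwq i).le (hσb i).le) ?_ (by positivity)
            have := mul_le_mul_of_nonneg_left (hσw_up i) (hwq i).le
            calc w i ^ q * σb i ≤ w i ^ q * (Real.exp (ε + γ) * w i) := this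
              _ = Real.exp (ε + γ) * (w i ^ q * w i) := by ring
        _ = Real.exp ((ε + γ) * p / 2) * w i := by
            rw [Real.mul_rpow (Real.exp_pos _).le (mul_nonneg (hwq i).le (hw i).le),
              ← Real.exp_mul, ← hww i, mul_div_assoc]
    · -- w ≤ exp((ε+γ)p/2) * w'
      calc w i = (w i ^ q * w i) ^ (p/2) := hww i
        _ ≤ (Real.exp (ε + γ) * (w i ^ q * σb i)) ^ (p/2) := by
            refine Real.rpow_le_rpow (mul_nonneg (hwq i).le (hw i).le) ?_ (by positivity)
            have := mul_le_mul_of_nonneg_left (hwσ_up i) (hwq i).le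
            calc w i ^ q * w i ≤ w i ^ q * (Real.exp (ε + γ) * σb i) := this
              _ = Real.exp (ε + γ) * (w i ^ q * σb i) := by ring
        _ = Real.exp ((ε + γ) * p / 2) * w' i := by
            rw [Real.mul_rpow (Real.exp_pos _).le (mul_nonneg (hwq i).le (hσb i).le),
              ← Real.exp_mul, ← hw' i, mul_div_assoc]
  refine ⟨hA1, ?_⟩
  -- Part 2
  set η : ℝ := (ε + γ) * (1 - p/2) with hη
  have habs : (ε + γ) * |1 - p/2| + γ = γ + η := by
    rw [hη, abs_of_pos (by linarith)]
    ring
  rw [habs]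
  have hw'pos : ∀ i, 0 < w' i := by
    intro i
    rw [hw' i]
    exact Real.rpow_pos_of_pos (mul_pos (hwq i) (hσb i)) _
  have hδq : ((ε + γ) * p / 2) * q = η := by
    rw [hq, hη]
    field_simp
  set s : ℝ := 1 - 2/p with hs
  have hsq : s = -q := by rw [hs, hq]; ring
  -- d-comparisons for exponent s = 1 - 2/p < 0
  set d : Fin m → ℝ := fun i => w i ^ s with hd
  set d' : Fin m → ℝ := fun i => w' i ^ s with hd'
  have hdpos : ∀ i, 0 < d i := fun i => Real.rpow_pos_of_pos (hw i) s
  have hd'pos : ∀ i, 0 < d' i := fun i => Real.rpow_pos_of_pos (hw'pos i) s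
  have hs_nonpos : s ≤ 0 := by rw [hsq]; linarith
  have hd_up : ∀ i, d i ≤ Real.exp η * d' i := by
    intro i
    have h1 := (hA1 i).1  -- exp(-δ₀) w' ≤ w
    have h2 : w i ^ s ≤ (Real.exp (-((ε + γ) * p / 2)) * w' i) ^ s :=
      Real.rpow_le_rpow_of_nonpos (mul_pos (Real.exp_pos _) (hw'pos i)) h1 hs_nonpos
    rw [Real.mul_rpow (Real.exp_pos _).le (hw'pos i).le, ← Real.exp_mul] at h2
    have e : -((ε + γ) * p / 2) * s = η := by rw [hsq, ← hδq]; ring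
    rw [e] at h2
    exact h2
  have hd_lo : ∀ i, Real.exp (-η) * d' i ≤ d i := by
    intro i
    have h1 := (hA1 i).2  -- w ≤ exp(δ₀) w'
    have h2 : (Real.exp ((ε + γ) * p / 2) * w' i) ^ s ≤ w i ^ s :=
      Real.rpow_le_rpow_of_nonpos (hw i) h1 hs_nonpos
    rw [Real.mul_rpow (Real.exp_pos _).le (hw'pos i).le, ← Real.exp_mul] at h2
    have e : (ε + γ) * p / 2 * s = -η := by rw [hsq, ← hδq]; ring
    rw [e] at h2
    exact h2
  -- w^q comparisons
  have hq_up : ∀ i, w i ^ q ≤ Real.exp η * w' i ^ q := by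
    intro i
    have h2 : w i ^ q ≤ (Real.exp ((ε + γ) * p / 2) * w' i) ^ q :=
      Real.rpow_le_rpow (hw i).le (hA1 i).2 hq0.le
    rw [Real.mul_rpow (Real.exp_pos _).le (hw'pos i).le, ← Real.exp_mul, hδq] at h2
    exact h2
  have hq_lo : ∀ i, Real.exp (-η) * w' i ^ q ≤ w i ^ q := by
    intro i
    have h2 : (Real.exp (-((ε + γ) * p / 2)) * w' i) ^ q ≤ w i ^ q :=
      Real.rpow_le_rpow (mul_pos (Real.exp_pos _) (hw'pos i)).le (hA1 i).1 hq0.le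
    rw [Real.mul_rpow (Real.exp_pos _).le (hw'pos i).le, ← Real.exp_mul] at h2
    have e : -((ε + γ) * p / 2) * q = -η := by rw [← hδq]; ring
    rw [e] at h2
    exact h2
  -- the P quantities
  set P : Fin m → ℝ := fun i => (A * (Aᵀ * Matrix.diagonal d * A)⁻¹ * Aᵀ) i i with hP
  set P' : Fin m → ℝ := fun i => (A * (Aᵀ * Matrix.diagonal d' * A)⁻¹ * Aᵀ) i i with hP'
  have hP_up : ∀ i, P i ≤ Real.exp η * P' i := by
    intro i
    have := inv_quad_le A hrank d d' hdpos hd'pos (Real.exp (-η)) (Real.exp_pos _)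
      (fun j => hd_lo j) i
    rwa [Real.exp_neg, inv_inv] at this
  have hP_lo : ∀ i, P' i ≤ Real.exp η * P i := by
    intro i
    have hcd : ∀ j, Real.exp (-η) * d j ≤ d' j := fun j => approx_flip' (hd_up j)
    have := inv_quad_le A hrank d' d hd'pos hdpos (Real.exp (-η)) (Real.exp_pos _) hcd i
    rwa [Real.exp_neg, inv_inv] at this
  -- lev formulas
  have hlev_w : ∀ i, L i = d i * P i := fun i => lev_scaled_eq A w hw p i
  have hlev_w' : ∀ i, lev (scaled w' p A) i = d' i * P' i :=
    fun i => lev_scaled_eq A w' (fun j => hw'pos j) p i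
  -- key algebraic identities
  have hqd : ∀ i, w i ^ q * d i = 1 := by
    intro i
    rw [hd, ← Real.rpow_add (hw i), hsq]
    simp
  have hqd' : ∀ i, w' i ^ q * d' i = 1 := by
    intro i
    rw [hd', ← Real.rpow_add (hw'pos i), hsq]
    simp
  have ht_eq : ∀ i, d' i * (w i ^ q * σb i) = w' i := by
    intro i
    have e1 : w i ^ q * σb i = w' i ^ (2/p) := by
      rw [hw' i, ← Real.rpow_mul (mul_pos (hwq i) (hσb i)).le]
      have : p / 2 * (2/p) = 1 := by field_simp
      rw [this, Real.rpow_one]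
    rw [e1, hd', ← Real.rpow_add (hw'pos i)]
    have : s + 2/p = 1 := by rw [hs]; ring
    rw [this, Real.rpow_one]
  have hkey : ∀ i, w i ^ q * (L i + z i) = P i + w i ^ q * z i := by
    intro i
    rw [hlev_w i]
    calc w i ^ q * (d i * P i + z i) = (w i ^ q * d i) * P i + w i ^ q * z i := by ring
      _ = P i + w i ^ q * z i := by rw [hqd i, one_mul]
  have hkey' : ∀ i, d' i * (P' i + w' i ^ q * z i) = lev (scaled w' p A) i + z i := by
    intro i
    rw [hlev_w' i]
    calc d' i * (P' i + w' i ^ q * z i) = d' i * P' i + (w' i ^ q * d' i) * z i := by ring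
      _ = d' i * P' i + z i := by rw [hqd' i, one_mul]
  intro i
  -- central two-sided bound:  t := w^q σb  vs  P' + w'^q z
  have hcen_up : w i ^ q * σb i ≤ Real.exp (γ + η) * (P' i + w' i ^ q * z i) := by
    have h1 : w i ^ q * σb i ≤ Real.exp γ * (P i + w i ^ q * z i) := by
      calc w i ^ q * σb i ≤ w i ^ q * (Real.exp γ * (L i + z i)) :=
            mul_le_mul_of_nonneg_left (hσ_apx i).2 (hwq i).le
        _ = Real.exp γ * (w i ^ q * (L i + z i)) := by ring
        _ = Real.exp γ * (P i + w i ^ q * z i) := by rw [hkey i]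
    have h2 : P i + w i ^ q * z i ≤ Real.exp η * (P' i + w' i ^ q * z i) := by
      have hz1 : w i ^ q * z i ≤ Real.exp η * (w' i ^ q * z i) := by
        have := mul_le_mul_of_nonneg_right (hq_up i) (hz i).le
        calc w i ^ q * z i ≤ Real.exp η * w' i ^ q * z i := this
          _ = Real.exp η * (w' i ^ q * z i) := by ring
      calc P i + w i ^ q * z i
          ≤ Real.exp η * P' i + Real.exp η * (w' i ^ q * z i) := add_le_add (hP_up i) hz1
        _ = Real.exp η * (P' i + w' i ^ q * z i) := by ring
    calc w i ^ q * σb i ≤ Real.exp γ * (P i + w i ^ q * z i) := h1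
      _ ≤ Real.exp γ * (Real.exp η * (P' i + w' i ^ q * z i)) :=
          mul_le_mul_of_nonneg_left h2 (Real.exp_pos γ).le
      _ = Real.exp (γ + η) * (P' i + w' i ^ q * z i) := by rw [← mul_assoc, ← Real.exp_add]
  have hcen_lo : P' i + w' i ^ q * z i ≤ Real.exp (γ + η) * (w i ^ q * σb i) := by
    have h2 : P' i + w' i ^ q * z i ≤ Real.exp η * (P i + w i ^ q * z i) := by
      have hz1 : w' i ^ q * z i ≤ Real.exp η * (w i ^ q * z i) := by
        have hwq1 : w' i ^ q ≤ Real.exp η * w i ^ q := approx_flip (hq_lo i)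
        have := mul_le_mul_of_nonneg_right hwq1 (hz i).le
        calc w' i ^ q * z i ≤ Real.exp η * w i ^ q * z i := this
          _ = Real.exp η * (w i ^ q * z i) := by ring
      calc P' i + w' i ^ q * z i
          ≤ Real.exp η * P i + Real.exp η * (w i ^ q * z i) := add_le_add (hP_lo i) hz1
        _ = Real.exp η * (P i + w i ^ q * z i) := by ring
    have h1 : P i + w i ^ q * z i ≤ Real.exp γ * (w i ^ q * σb i) := by
      calc P i + w i ^ q * z i = w i ^ q * (L i + z i) := (hkey i).symm
        _ ≤ w i ^ q * (Real.exp γ * σb i) := mul_le_mul_of_nonneg_left (hLσ_up i) (hwq i).le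
        _ = Real.exp γ * (w i ^ q * σb i) := by ring
    calc P' i + w' i ^ q * z i ≤ Real.exp η * (P i + w i ^ q * z i) := h2
      _ ≤ Real.exp η * (Real.exp γ * (w i ^ q * σb i)) :=
          mul_le_mul_of_nonneg_left h1 (Real.exp_pos η).le
      _ = Real.exp (γ + η) * (w i ^ q * σb i) := by
          rw [← mul_assoc, ← Real.exp_add, add_comm η γ]
  -- multiply the central bounds by d' i > 0 and conclude
  constructor
  · refine approx_flip' ?_
    have h := mul_le_mul_of_nonneg_left hcen_lo (hd'pos i).le
    rw [hkey' i] at h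
    have e2 : d' i * (Real.exp (γ + η) * (w i ^ q * σb i))
        = Real.exp (γ + η) * w' i := by
      rw [← ht_eq i]; ring
    rw [e2] at h
    simpa using h
  · have h := mul_le_mul_of_nonneg_left hcen_up (hd'pos i).le
    rw [ht_eq i] at h
    have e2 : d' i * (Real.exp (γ + η) * (P' i + w' i ^ q * z i))
        = Real.exp (γ + η) * (lev (scaled w' p A) i + z i) := by
      rw [← hkey' i]; ring
    rw [e2] at h
    simpa using h
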